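/- For integer u ≥ 2 and integer n ≥ 8(2u−1)/(8−√7), the inequality (n − 2u + 1)^u · 16^u / (7(u+2)) ≥ n^u holds. -/
import Mathlib

lemma aux_pow_ge : ∀ u : ℕ, 2 ≤ u → 7 * ((u : ℝ) + 2) ≤ (2 * Real.sqrt 7) ^ u := by
  have hs : (2.5 : ℝ) ≤ Real.sqrt 7 := by
    rw [show (2.5 : ℝ) = Real.sqrt (2.5 ^ 2) by rw [Real.sqrt_sq]; norm_num]
    exact Real.sqrt_le_sqrt (by norm_num)
  intro u hu
  induction u, hu using Nat.le_induction with
  | base =>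
    rw [mul_pow, Real.sq_sqrt (by norm_num : (7:ℝ) ≥ 0).le]
    norm_num
  | succ u hu ih =>
    have h5 : (5 : ℝ) ≤ 2 * Real.sqrt 7 := by linarith
    have hpos : (0:ℝ) ≤ 7 * ((u : ℝ) + 2) := by positivity
    calc 7 * (((u + 1 : ℕ) : ℝ) + 2) = 7 * ((u:ℝ) + 3) := by push_cast; ring
      _ ≤ (7 * ((u : ℝ) + 2)) * 5 := by
          push_cast; nlinarith [Nat.cast_nonneg (α := ℝ) u]
      _ ≤ (2 * Real.sqrt 7) ^ u * (2 * Real.sqrt 7) := by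
          exact mul_le_mul ih h5 (by norm_num) (le_trans hpos ih)
      _ = (2 * Real.sqrt 7) ^ (u + 1) := (pow_succ _ _).symm
    -- adjust shape
  
theorem shifted_pow_ge (u n : ℕ) (hu : 2 ≤ u)
    (hn : 8 * (2 * (u : ℝ) - 1) / (8 - Real.sqrt 7) ≤ (n : ℝ)) :
    (n : ℝ) ^ u ≤ ((n : ℝ) - 2 * u + 1) ^ u * 16 ^ u / (7 * ((u : ℝ) + 2)) := by
  have hs0 : (0:ℝ) ≤ Real.sqrt 7 := Real.sqrt_nonneg 7
  have hs3 : Real.sqrt 7 ≤ 3 := by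
    rw [show (3:ℝ) = Real.sqrt 9 by rw [show (9:ℝ) = 3^2 by norm_num, Real.sqrt_sq]; norm_num]
    exact Real.sqrt_le_sqrt (by norm_num)
  have hs25 : (2.5 : ℝ) ≤ Real.sqrt 7 := by
    rw [show (2.5 : ℝ) = Real.sqrt (2.5 ^ 2) by rw [Real.sqrt_sq]; norm_num]
    exact Real.sqrt_le_sqrt (by norm_num)
  have hu2 : (2:ℝ) ≤ (u:ℝ) := by exact_mod_cast hu
  have hden : (0:ℝ) < 8 - Real.sqrt 7 := by linarith
  -- from hn: 8*(2u-1) ≤ (8 - √7) * n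
  have hn' : 8 * (2 * (u : ℝ) - 1) ≤ (8 - Real.sqrt 7) * n := by
    rw [div_le_iff₀ hden] at hn; linarith
  have hnpos : (0:ℝ) < n := by nlinarith
  have hkey : 2 * Real.sqrt 7 * n ≤ 16 * ((n:ℝ) - 2 * u + 1) := by nlinarith
  have hm : (0:ℝ) < (n:ℝ) - 2 * u + 1 := by nlinarith
  have hpow : (2 * Real.sqrt 7 * n) ^ u ≤ (16 * ((n:ℝ) - 2 * u + 1)) ^ u :=
    pow_le_pow_left₀ (by positivity) hkey u
  have haux := aux_pow_ge u hu
  have h7 : (0:ℝ) < 7 * ((u : ℝ) + 2) := by positivity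
  rw [le_div_iff₀ h7]
  calc (n:ℝ)^u * (7 * ((u:ℝ)+2)) ≤ (n:ℝ)^u * (2 * Real.sqrt 7)^u := by
        exact mul_le_mul_of_nonneg_left haux (by positivity)
    _ = (2 * Real.sqrt 7 * n)^u := by rw [← mul_pow, mul_comm]
    _ ≤ (16 * ((n:ℝ) - 2 * u + 1)) ^ u := hpow
    _ = ((n:ℝ) - 2 * u + 1) ^ u * 16 ^ u := by rw [mul_pow, mul_comm]
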